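/- For all real numbers s with 0 < s < 1/2, all x > 4s, and all y > 0, one has β(x-4s, y) ≤ β(x,y) · ((1+4s)x/(x-4s)) · (x(x+1)/((x+1)² + y²))^{-2s}. -/

import Mathlib

open MeasureTheory

/-- `β(x,y) = ∫_{-π/2}^{π/2} (cos t)^{x-1} e^{yt} dt`. -/
noncomputable def beta (x y : ℝ) : ℝ :=
  ∫ t in (-(Real.pi / 2))..(Real.pi / 2), (Real.cos t) ^ (x - 1) * Real.exp (y * t)

namespace BetaAux

open Real Set intervalIntegral
open scoped ENNReal

lemma hle : -(π/2) ≤ π/2 := by linarith [Real.pi_pos]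

lemma integrand_meas (a y : ℝ) (μ : Measure ℝ) :
    AEStronglyMeasurable (fun t => Real.cos t ^ (a - 1) * Real.exp (y * t)) μ := by
  refine Measurable.aestronglyMeasurable ?_
  exact (Real.continuous_cos.measurable.pow_const (a-1)).mul
    (Real.continuous_exp.measurable.comp (measurable_const.mul measurable_id))

lemma beta_integrable {a : ℝ} (ha : 0 < a) (y : ℝ) :
    IntervalIntegrable (fun t => Real.cos t ^ (a - 1) * Real.exp (y * t))
      volume (-(π/2)) (π/2) := by
  have hπ := Real.pi_pos
  rcases le_or_gt 1 a with h1 | h1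
  · apply ContinuousOn.intervalIntegrable
    apply Continuous.continuousOn
    refine Continuous.mul ?_ (Real.continuous_exp.comp (continuous_const.mul continuous_id))
    rw [continuous_iff_continuousAt]
    intro t
    exact (Real.continuousAt_rpow_const _ _ (Or.inr (by linarith))).comp
      Real.continuous_cos.continuousAt
  · set r := a - 1 with hrdef
    have hr0 : r < 0 := by simp [hrdef]; linarith
    have hr1 : -1 < r := by simp [hrdef]; linarith
    set C := (2/π) ^ r with hC
    have hCpos : 0 < C := Real.rpow_pos_of_pos (by positivity) _
    set E := Real.exp (|y| * (π/2)) with hE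
    have hg : IntervalIntegrable (fun t => C * E * ((π/2 - t) ^ r + (π/2 + t) ^ r))
        volume (-(π/2)) (π/2) := by
      apply IntervalIntegrable.const_mul
      apply IntervalIntegrable.add
      · have h := (intervalIntegrable_rpow' (a := 0) (b := π) hr1).comp_sub_left (π/2)
        have : π/2 - 0 = π/2 := by ring
        simpa [this, show π/2 - π = -(π/2) by ring] using h.symm
      · have h := (intervalIntegrable_rpow' (a := 0) (b := π) hr1).comp_add_right (π/2)
        simpa [show (0:ℝ) - π/2 = -(π/2) by ring, show π - π/2 = π/2 by ring,
          add_comm] using h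
    apply hg.mono_fun (integrand_meas a y _)
    rw [Filter.EventuallyLE, ae_restrict_iff' measurableSet_uIoc]
    apply Filter.Eventually.of_forall
    intro t ht
    rw [Set.uIoc_of_le hle] at ht
    obtain ⟨ht1, ht2⟩ := ht
    have hcos0 : 0 ≤ Real.cos t := Real.cos_nonneg_of_mem_Icc ⟨by linarith, ht2⟩
    have hsum0 : 0 ≤ (π/2 - t) ^ r + (π/2 + t) ^ r :=
      add_nonneg (Real.rpow_nonneg (by linarith) _) (Real.rpow_nonneg (by linarith) _)
    have hexp : Real.exp (y * t) ≤ E := by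
      rw [hE]
      apply Real.exp_le_exp.mpr
      calc y * t ≤ |y * t| := le_abs_self _
        _ = |y| * |t| := abs_mul _ _
        _ ≤ |y| * (π/2) := by
            apply mul_le_mul_of_nonneg_left _ (abs_nonneg _)
            rw [abs_le]; constructor <;> linarith
    have hcosr : Real.cos t ^ r ≤ C * ((π/2 - t) ^ r + (π/2 + t) ^ r) := by
      rcases eq_or_lt_of_le ht2 with rfl | ht2'
      · rw [Real.cos_pi_div_two, Real.zero_rpow hr0.ne]
        positivity
      · rcases le_or_gt 0 t with hpos | hneg
        · have hlb : 2/π * (π/2 - t) ≤ Real.cos t := by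
            rw [← Real.sin_pi_div_two_sub]
            exact Real.mul_le_sin (by linarith) (by linarith)
          have hb0 : 0 < 2/π * (π/2 - t) := by
            apply mul_pos (by positivity); linarith
          calc Real.cos t ^ r ≤ (2/π * (π/2 - t)) ^ r :=
                Real.rpow_le_rpow_of_nonpos hb0 hlb hr0.le
            _ = C * (π/2 - t) ^ r := by
                rw [Real.mul_rpow (by positivity) (by linarith), hC]
            _ ≤ C * ((π/2 - t) ^ r + (π/2 + t) ^ r) := by
                apply mul_le_mul_of_nonneg_left _ hCpos.le
                nlinarith [Real.rpow_nonneg (show (0:ℝ) ≤ π/2 + t by linarith) r]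
        · have hlb : 2/π * (π/2 + t) ≤ Real.cos t := by
            have : Real.sin (π/2 - (-t)) = Real.cos (-t) := Real.sin_pi_div_two_sub _
            rw [Real.cos_neg] at this
            rw [← this, show π/2 - (-t) = π/2 + t by ring] at *
            exact Real.mul_le_sin (by linarith) (by linarith)
          have hb0 : 0 < 2/π * (π/2 + t) := by
            apply mul_pos (by positivity); linarith
          calc Real.cos t ^ r ≤ (2/π * (π/2 + t)) ^ r :=
                Real.rpow_le_rpow_of_nonpos hb0 hlb hr0.le
            _ = C * (π/2 + t) ^ r := by
                rw [Real.mul_rpow (by positivity) (by linarith), hC]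
            _ ≤ C * ((π/2 - t) ^ r + (π/2 + t) ^ r) := by
                apply mul_le_mul_of_nonneg_left _ hCpos.le
                nlinarith [Real.rpow_nonneg (show (0:ℝ) ≤ π/2 - t by linarith) r]
    have h1 : ‖Real.cos t ^ r * Real.exp (y * t)‖ = Real.cos t ^ r * Real.exp (y * t) := by
      apply abs_of_nonneg
      exact mul_nonneg (Real.rpow_nonneg hcos0 _) (Real.exp_pos _).le
    have h2 : ‖C * E * ((π/2 - t) ^ r + (π/2 + t) ^ r)‖
        = C * E * ((π/2 - t) ^ r + (π/2 + t) ^ r) := by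
      apply abs_of_nonneg
      positivity
    simp only [Real.norm_eq_abs] at *
    rw [h1, h2]
    calc Real.cos t ^ r * Real.exp (y * t)
        ≤ (C * ((π/2 - t) ^ r + (π/2 + t) ^ r)) * E := by
          apply mul_le_mul hcosr hexp (Real.exp_pos _).le (by positivity)
      _ = C * E * ((π/2 - t) ^ r + (π/2 + t) ^ r) := by ring

lemma beta_pos {a : ℝ} (ha : 0 < a) (y : ℝ) : 0 < beta a y := by
  apply intervalIntegral.intervalIntegral_pos_of_pos_on (beta_integrable ha y)
  · intro t ht
    have hc : 0 < Real.cos t := Real.cos_pos_of_mem_Ioo ht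
    exact mul_pos (Real.rpow_pos_of_pos hc _) (Real.exp_pos _)
  · linarith [Real.pi_pos]

lemma beta_eq_Ioo (a y : ℝ) :
    beta a y = ∫ t in Ioo (-(π/2)) (π/2), Real.cos t ^ (a - 1) * Real.exp (y * t) := by
  rw [beta, intervalIntegral.integral_of_le hle, integral_Ioc_eq_integral_Ioo]

lemma beta_int_Ioo {a : ℝ} (ha : 0 < a) (y : ℝ) :
    IntegrableOn (fun t => Real.cos t ^ (a - 1) * Real.exp (y * t))
      (Ioo (-(π/2)) (π/2)) volume := by
  have h := beta_integrable ha y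
  rw [intervalIntegrable_iff, uIoc_of_le hle] at h
  exact h.mono_set Ioo_subset_Ioc_self

lemma beta_rec {a : ℝ} (ha : 0 < a) (y : ℝ) :
    ((a+1)^2 + y^2) * beta (a+2) y = a * (a+1) * beta a y := by
  have hπ := Real.pi_pos
  set F : ℝ → ℝ := fun t =>
    Real.cos t ^ a * Real.exp (y*t) * ((a+1) * Real.sin t + y * Real.cos t) with hF
  set G : ℝ → ℝ := fun t =>
    ((a+1)^2 + y^2) * (Real.cos t ^ ((a+2) - 1) * Real.exp (y*t))
      - a*(a+1) * (Real.cos t ^ (a - 1) * Real.exp (y*t)) with hG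
  have hIa2 := beta_integrable (show (0:ℝ) < a + 2 by linarith) y
  have hIa := beta_integrable ha y
  have hint : IntervalIntegrable G volume (-(π/2)) (π/2) :=
    (hIa2.const_mul _).sub (hIa.const_mul _)
  have hcont : ContinuousOn F (Icc (-(π/2)) (π/2)) := by
    apply Continuous.continuousOn
    have hc : Continuous fun t => Real.cos t ^ a := by
      rw [continuous_iff_continuousAt]; intro t
      exact (Real.continuousAt_rpow_const _ _ (Or.inr ha.le)).comp
        Real.continuous_cos.continuousAt
    exact (hc.mul (Real.continuous_exp.comp (continuous_const.mul continuous_id))).mul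
      ((continuous_const.mul Real.continuous_sin).add (continuous_const.mul Real.continuous_cos))
  have hderiv : ∀ t ∈ Ioo (-(π/2)) (π/2), HasDerivWithinAt F (G t) (Ioi t) t := by
    intro t ht
    have hct : 0 < Real.cos t := Real.cos_pos_of_mem_Ioo ht
    have h1 : HasDerivAt (fun t => Real.cos t ^ a)
        (a * Real.cos t ^ (a-1) * (-Real.sin t)) t :=
      (Real.hasDerivAt_rpow_const (p := a) (Or.inl hct.ne')).comp t (Real.hasDerivAt_cos t)
    have h2 : HasDerivAt (fun t => Real.exp (y*t)) (Real.exp (y*t) * y) t := by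
      simpa [Function.comp_def] using (Real.hasDerivAt_exp (y*t)).comp t ((hasDerivAt_id t).const_mul y)
    have h3 : HasDerivAt (fun t => (a+1) * Real.sin t + y * Real.cos t)
        ((a+1) * Real.cos t + y * (-Real.sin t)) t :=
      ((Real.hasDerivAt_sin t).const_mul _).add ((Real.hasDerivAt_cos t).const_mul _)
    have hD := ((h1.mul h2).mul h3)
    have heq : (a * Real.cos t ^ (a-1) * (-Real.sin t) * Real.exp (y*t)
          + Real.cos t ^ a * (Real.exp (y*t) * y)) * ((a+1) * Real.sin t + y * Real.cos t)
          + Real.cos t ^ a * Real.exp (y*t) * ((a+1) * Real.cos t + y * (-Real.sin t))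
        = G t := by
      have eA : Real.cos t ^ a = Real.cos t ^ (a-1) * Real.cos t := by
        rw [← Real.rpow_add_one hct.ne' (a-1), sub_add_cancel]
      have eB : Real.cos t ^ ((a+2)-1) = Real.cos t ^ (a-1) * Real.cos t * Real.cos t := by
        rw [← eA, ← Real.rpow_add_one hct.ne' a]
        congr 1; ring
      have hs2 : Real.sin t ^ 2 = 1 - Real.cos t ^ 2 := Real.sin_sq t
      rw [hG]
      simp only []
      rw [eB, eA]
      linear_combination (-(a*(a+1)) * (Real.cos t ^ (a-1)) * Real.exp (y*t)) * hs2
    rw [← heq]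
    exact hD.hasDerivWithinAt
  have hFTC := integral_eq_sub_of_hasDeriv_right_of_le hle hcont hderiv hint
  have hF2 : F (π/2) = 0 := by
    simp [hF, Real.cos_pi_div_two, Real.zero_rpow ha.ne']
  have hF1 : F (-(π/2)) = 0 := by
    simp [hF, Real.cos_neg, Real.cos_pi_div_two, Real.zero_rpow ha.ne']
  rw [hF1, hF2, sub_zero] at hFTC
  have hsplit : ∫ t in (-(π/2))..(π/2), G t
      = ((a+1)^2 + y^2) * beta (a+2) y - a*(a+1) * beta a y := by
    rw [hG]
    rw [integral_sub (hIa2.const_mul _) (hIa.const_mul _),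
      intervalIntegral.integral_const_mul, intervalIntegral.integral_const_mul]
    rfl
  rw [hsplit] at hFTC
  linarith

lemma beta_convex {b c θ : ℝ} (hb : 0 < b) (hc : 0 < c) (hθ0 : 0 < θ) (hθ1 : θ < 1) (y : ℝ) :
    beta (θ*b + (1-θ)*c) y ≤ beta b y ^ θ * beta c y ^ (1-θ) := by
  have hπ := Real.pi_pos
  have hθ1' : 0 < 1 - θ := by linarith
  have e : Real.HolderConjugate (1/θ) (1/(1-θ)) :=
    Real.holderConjugate_one_div hθ0 hθ1' (by ring)
  set μ : Measure ℝ := volume.restrict (Ioo (-(π/2)) (π/2)) with hμ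
  -- pointwise nonneg on Ioo
  have hcospos : ∀ t ∈ Ioo (-(π/2)) (π/2), 0 < Real.cos t := fun t ht =>
    Real.cos_pos_of_mem_Ioo ht
  have posI : ∀ a : ℝ, ∀ t ∈ Ioo (-(π/2)) (π/2),
      0 ≤ Real.cos t ^ (a - 1) * Real.exp (y * t) := fun a t ht =>
    mul_nonneg (Real.rpow_nonneg (hcospos t ht).le _) (Real.exp_pos _).le
  -- Memℒp of the θ-powers
  have memLp : ∀ {a θ' : ℝ}, 0 < a → 0 < θ' → θ' < 1 →
      MemLp (fun t => (Real.cos t ^ (a - 1) * Real.exp (y * t)) ^ θ')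
        (ENNReal.ofReal (1/θ')) μ := by
    intro a θ' ha hθ'0 hθ'1
    have A : ENNReal.ofReal (1/θ') ≠ 0 := by
      rw [Ne, ENNReal.ofReal_eq_zero, not_le]; positivity
    have B : ENNReal.ofReal (1/θ') ≠ ∞ := ENNReal.ofReal_ne_top
    have hmeas : AEStronglyMeasurable
        (fun t => (Real.cos t ^ (a - 1) * Real.exp (y * t)) ^ θ') μ := by
      refine Measurable.aestronglyMeasurable ?_
      exact ((Real.continuous_cos.measurable.pow_const (a-1)).mul
        (Real.continuous_exp.measurable.comp (measurable_const.mul measurable_id))).pow_const θ'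
    rw [← memLp_norm_rpow_iff hmeas A B, ENNReal.toReal_ofReal (by positivity),
      ENNReal.div_self A B, memLp_one_iff_integrable]
    apply Integrable.congr (beta_int_Ioo ha y)
    refine Filter.eventuallyEq_of_mem (self_mem_ae_restrict measurableSet_Ioo) fun t ht => ?_
    rw [Real.norm_eq_abs, abs_of_nonneg (Real.rpow_nonneg (posI a t ht) _),
      ← Real.rpow_mul (posI a t ht), mul_one_div_cancel hθ'0.ne', Real.rpow_one]
  -- nonnegativity a.e.
  have aepos : ∀ (a θ' : ℝ), ∀ᵐ t ∂μ,
      0 ≤ (Real.cos t ^ (a - 1) * Real.exp (y * t)) ^ θ' := fun a θ' =>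
    (ae_restrict_iff' measurableSet_Ioo).mpr
      (Filter.Eventually.of_forall fun t ht => Real.rpow_nonneg (posI a t ht) _)
  have hh := MeasureTheory.integral_mul_le_Lp_mul_Lq_of_nonneg e (aepos b θ) (aepos c (1-θ))
    (memLp hb hθ0 hθ1) (memLp hc hθ1' (by linarith))
  have eq1 : (∫ t, (Real.cos t ^ (b - 1) * Real.exp (y * t)) ^ θ *
      (Real.cos t ^ (c - 1) * Real.exp (y * t)) ^ (1-θ) ∂μ) = beta (θ*b + (1-θ)*c) y := by
    rw [beta_eq_Ioo, hμ]
    refine setIntegral_congr_fun measurableSet_Ioo fun t ht => ?_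
    have hct := hcospos t ht
    rw [Real.mul_rpow (Real.rpow_nonneg hct.le _) (Real.exp_pos _).le,
      Real.mul_rpow (Real.rpow_nonneg hct.le _) (Real.exp_pos _).le,
      ← Real.rpow_mul hct.le, ← Real.rpow_mul hct.le, ← Real.exp_mul, ← Real.exp_mul,
      mul_mul_mul_comm, ← Real.rpow_add hct, ← Real.exp_add]
    congr 1
    · congr 1; ring
    · congr 1; ring
  have eqp : ∀ {a θ' : ℝ}, 0 < a → 0 < θ' →
      (∫ t, ((Real.cos t ^ (a - 1) * Real.exp (y * t)) ^ θ') ^ (1/θ') ∂μ) = beta a y := by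
    intro a θ' ha hθ'0
    rw [beta_eq_Ioo, hμ]
    refine setIntegral_congr_fun measurableSet_Ioo fun t ht => ?_
    rw [← Real.rpow_mul (posI a t ht), mul_one_div_cancel hθ'0.ne', Real.rpow_one]
  rw [eq1, eqp hb hθ0, eqp hc hθ1', one_div_one_div, one_div_one_div] at hh
  exact hh

end BetaAux

open BetaAux in
theorem beta_negative_upper_bound (x y s : ℝ) (hs0 : 0 < s) (hs : s < 1 / 2)
    (hx : 4 * s < x) (hy : 0 < y) :
    beta (x - 4 * s) y ≤
      beta x y * ((1 + 4 * s) * x / (x - 4 * s)) *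
        (x * (x + 1) / ((x + 1) ^ 2 + y ^ 2)) ^ (-(2 * s)) := by
  set u := x - 4*s with hu
  have hu0 : 0 < u := by simp [hu]; linarith
  have hx0 : 0 < x := by linarith
  have hBx := beta_pos hx0 y
  have hBu2 := beta_pos (show (0:ℝ) < u + 2 by linarith) y
  have hBx2 := beta_pos (show (0:ℝ) < x + 2 by linarith) y
  set Du := (u+1)^2 + y^2 with hDu
  set Dx := (x+1)^2 + y^2 with hDx
  have hDu0 : 0 < Du := by positivity
  have hDx0 : 0 < Dx := by positivity
  set r := x*(x+1)/Dx with hr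
  have hr0 : 0 < r := by rw [hr]; positivity
  -- convexity
  have hconv : beta (u+2) y ≤ beta x y ^ (2*s) * beta (x+2) y ^ (1-2*s) := by
    have h := beta_convex hx0 (show (0:ℝ) < x+2 by linarith)
      (show (0:ℝ) < 2*s by linarith) (by linarith) y
    rwa [show (2*s)*x + (1-2*s)*(x+2) = u + 2 by rw [hu]; ring] at h
  -- recurrences
  have hrecu := beta_rec hu0 y
  have hrecx := beta_rec hx0 y
  rw [← hDu] at hrecu
  rw [← hDx] at hrecx
  have h2 : beta (x+2) y = beta x y * r := by
    rw [hr]; field_simp; linarith [hrecx]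
  -- the core polynomial inequality
  have core : Du * (x+1) ≤ (1+4*s) * ((u+1) * Dx) := by
    rw [hDu, hDx, hu]
    nlinarith [mul_pos hs0 (mul_pos (show (0:ℝ) < x-4*s+1 by linarith)
        (show (0:ℝ) < x+1 by linarith)),
      mul_pos hs0 (mul_pos (show (0:ℝ) < x-4*s+1 by linarith)
        (mul_pos (show (0:ℝ) < x+1 by linarith) (show (0:ℝ) < x+1 by linarith))),
      mul_nonneg (mul_nonneg hs0.le (show (0:ℝ) ≤ x-4*s by linarith)) (sq_nonneg y)]
  have key : Du / (u*(u+1)) * r ^ (1-2*s) ≤ ((1+4*s)*x/u) * r ^ (-(2*s)) := by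
    have h3 : r ^ (1-2*s) = r * r ^ (-(2*s)) := by
      rw [show (1 - 2*s) = 1 + -(2*s) by ring, Real.rpow_add hr0, Real.rpow_one]
    rw [h3, ← mul_assoc]
    apply mul_le_mul_of_nonneg_right _ (Real.rpow_nonneg hr0.le _)
    rw [hr, div_mul_div_comm, div_le_div_iff₀ (by positivity) hu0]
    calc Du * (x*(x+1)) * u = (Du*(x+1))*(x*u) := by ring
      _ ≤ ((1+4*s)*((u+1)*Dx))*(x*u) :=
          mul_le_mul_of_nonneg_right core (by positivity)
      _ = (1+4*s)*x*(u*(u+1)*Dx) := by ring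
  calc beta u y = Du / (u*(u+1)) * beta (u+2) y := by
        field_simp; linarith [hrecu]
    _ ≤ Du / (u*(u+1)) * (beta x y ^ (2*s) * beta (x+2) y ^ (1-2*s)) :=
        mul_le_mul_of_nonneg_left hconv (by positivity)
    _ = beta x y * (Du / (u*(u+1)) * r ^ (1-2*s)) := by
        rw [h2, Real.mul_rpow hBx.le hr0.le,
          show beta x y ^ (2*s) * (beta x y ^ (1-2*s) * r ^ (1-2*s))
            = (beta x y ^ (2*s) * beta x y ^ (1-2*s)) * r ^ (1-2*s) by ring,
          ← Real.rpow_add hBx, show 2*s + (1-2*s) = 1 by ring, Real.rpow_one]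
        ring
    _ ≤ beta x y * (((1+4*s)*x/u) * r ^ (-(2*s))) :=
        mul_le_mul_of_nonneg_left key hBx.le
    _ = beta x y * ((1 + 4*s) * x / u) * r ^ (-(2*s)) := by ring
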